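/- Eventual polynomial-logarithmic bound on the upper-LIL events: let λ > 1 and 1 < γ < λ be reals, let n_r be the integer nearest to γ^r, and for r large enough that log log n_r > 0 define B_r = {X ∈ 2^ℕ : ∃ n with n_r ≤ n ≤ n_{r+1} such that S_n(X) − n/2 > λ·√((n_r/2)·log log n_r)}. Then there exist a constant C > 0 and R ∈ ℕ such that for all r ≥ R, μ(B_r) ≤ C/(log n_r)^λ. -/

import Mathlib

open MeasureTheory Filter

/-- The sum of the first `n` coordinates of a point of Cantor space, as a real number. -/
noncomputable def coinSum (X : ℕ → Bool) (n : ℕ) : ℝ :=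
  ∑ i ∈ Finset.range n, ((X i).toNat : ℝ)

/-- `μ` is the fair-coin measure on Cantor space: the probability measure under which the
coordinates are i.i.d. Bernoulli(1/2), i.e. every finite cylinder determined by prescribing
the coordinates in a finite set `s` has measure `(1/2)^|s|`. -/
def IsFairCoin (μ : Measure (ℕ → Bool)) : Prop :=
  IsProbabilityMeasure μ ∧
    ∀ (s : Finset ℕ) (f : ℕ → Bool),
      μ {X | ∀ i ∈ s, X i = f i} = (1 / 2) ^ s.card
/-- `nearestNat γ r` is the integer nearest to `γ ^ r`, as a natural number. -/
noncomputable def nearestNat (γ : ℝ) (r : ℕ) : ℕ := (round (γ ^ r)).toNat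

/-- The upper-LIL exceptional event `B_r` for parameters `λ` and `γ`:
the set of `X` such that `S_n(X) − n/2 > λ √((n_r/2) log log n_r)` for some
`n_r ≤ n ≤ n_{r+1}`, where `n_r` is the integer nearest to `γ^r`. -/
def upperLILEvent (lam γ : ℝ) (r : ℕ) : Set (ℕ → Bool) :=
  {X | ∃ n : ℕ, nearestNat γ r ≤ n ∧ n ≤ nearestNat γ (r + 1) ∧
    lam * Real.sqrt ((nearestNat γ r / 2) * Real.log (Real.log (nearestNat γ r)))
      < coinSum X n - n / 2}


namespace LILAux
open Finset

def walk (v : ℕ → Bool) (n : ℕ) : ℤ :=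
  ∑ i ∈ Finset.range n, (if v i then 1 else -1)

lemma walk_zero (v : ℕ → Bool) : walk v 0 = 0 := by simp [walk]

lemma walk_succ (v : ℕ → Bool) (n : ℕ) :
    walk v (n + 1) = walk v n + (if v n then 1 else -1) := Finset.sum_range_succ _ n

lemma walk_congr {u w : ℕ → Bool} {n : ℕ} (h : ∀ i < n, u i = w i) : walk u n = walk w n :=
  Finset.sum_congr rfl fun i hi => by rw [h i (Finset.mem_range.1 hi)]

def flipAfter (t : ℕ) (v : ℕ → Bool) : ℕ → Bool := fun i => if t ≤ i then !(v i) else v i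

lemma walk_flipAfter_of_le (v : ℕ → Bool) {t n : ℕ} (h : n ≤ t) :
    walk (flipAfter t v) n = walk v n :=
  walk_congr fun i hi => by simp [flipAfter, Nat.not_le.2 (lt_of_lt_of_le hi h)]

lemma walk_flipAfter_of_ge (v : ℕ → Bool) {t n : ℕ} (h : t ≤ n) :
    walk (flipAfter t v) n = 2 * walk v t - walk v n := by
  induction n, h using Nat.le_induction with
  | base => rw [walk_flipAfter_of_le v le_rfl]; ring
  | succ n hn ih =>
      rw [walk_succ, walk_succ, ih]
      have hf : flipAfter t v n = !(v n) := by simp [flipAfter, hn]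
      rw [hf]; cases v n <;> simp <;> ring

def ext (N : ℕ) (v : Fin N → Bool) : ℕ → Bool := fun i => if h : i < N then v ⟨i, h⟩ else false

lemma ext_lt {N : ℕ} (v : Fin N → Bool) {i : ℕ} (h : i < N) : ext N v i = v ⟨i, h⟩ := dif_pos h

def hitSet (N : ℕ) (m : ℤ) (v : Fin N → Bool) : Set ℕ := {n | n ≤ N ∧ m ≤ walk (ext N v) n}

noncomputable def tau (N : ℕ) (m : ℤ) (v : Fin N → Bool) : ℕ := sInf (hitSet N m v)

noncomputable def reflMap (N : ℕ) (m : ℤ) (v : Fin N → Bool) : Fin N → Bool :=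
  fun i => if tau N m v ≤ (i : ℕ) then !(v i) else v i

lemma walk_ext_reflMap (N : ℕ) (m : ℤ) (v : Fin N → Bool) {n : ℕ} (hn : n ≤ N) :
    walk (ext N (reflMap N m v)) n = walk (flipAfter (tau N m v) (ext N v)) n := by
  refine walk_congr fun i hi => ?_
  have hiN : i < N := lt_of_lt_of_le hi hn
  rw [ext_lt _ hiN]
  simp only [reflMap, flipAfter, ext_lt v hiN]

lemma walk_tau {N : ℕ} {m : ℤ} (hm : 1 ≤ m) {v : Fin N → Bool}
    (hv : (hitSet N m v).Nonempty) : walk (ext N v) (tau N m v) = m := by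
  have htau := Nat.sInf_mem hv
  have h1 : m ≤ walk (ext N v) (tau N m v) := htau.2
  have hne : tau N m v ≠ 0 := by
    intro h0
    rw [h0, walk_zero] at h1; omega
  obtain ⟨t, ht⟩ : ∃ t, tau N m v = t + 1 := ⟨tau N m v - 1, (Nat.succ_pred_eq_of_pos (Nat.pos_of_ne_zero hne)).symm⟩
  have htlt : t < sInf (hitSet N m v) := by unfold tau at ht; omega
  have htmem : t ∉ hitSet N m v := Nat.notMem_of_lt_sInf htlt
  have htN : t ≤ N := by have := htau.1; omega
  have h2 : walk (ext N v) t < m := by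
    by_contra h; exact htmem ⟨htN, le_of_not_gt h⟩
  have h3 := walk_succ (ext N v) t
  rw [← ht] at h3
  split_ifs at h3 <;> omega

lemma tau_reflMap {N : ℕ} {m : ℤ} (hm : 1 ≤ m) {v : Fin N → Bool}
    (hv : (hitSet N m v).Nonempty) : tau N m (reflMap N m v) = tau N m v := by
  set τ := tau N m v with hτ
  have htau := Nat.sInf_mem hv
  have hτN : τ ≤ N := htau.1
  have hwt := walk_tau hm hv
  have h1 : ∀ n ≤ τ, walk (ext N (reflMap N m v)) n = walk (ext N v) n := by
    intro n hn
    rw [walk_ext_reflMap N m v (le_trans hn hτN), walk_flipAfter_of_le _ hn]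
  have hτmem : τ ∈ hitSet N m (reflMap N m v) := ⟨hτN, by rw [h1 τ le_rfl, hwt]⟩
  refine le_antisymm (Nat.sInf_le hτmem) ?_
  by_contra h
  push_neg at h
  have hs := Nat.sInf_mem (⟨τ, hτmem⟩ : (hitSet N m (reflMap N m v)).Nonempty)
  set s := tau N m (reflMap N m v) with hsdef
  have hsτ : s < τ := h
  have : s ∉ hitSet N m v := Nat.notMem_of_lt_sInf hsτ
  exact this ⟨hs.1, by rw [← h1 s (le_of_lt hsτ)]; exact hs.2⟩

lemma reflMap_involutive {N : ℕ} {m : ℤ} (hm : 1 ≤ m) {v : Fin N → Bool}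
    (hv : (hitSet N m v).Nonempty) : reflMap N m (reflMap N m v) = v := by
  funext i
  simp only [reflMap, tau_reflMap hm hv]
  split_ifs <;> simp

lemma reflection_count (N : ℕ) (m : ℤ) (hm : 1 ≤ m) :
    (univ.filter (fun v : Fin N → Bool =>
        ∃ n, n ≤ N ∧ m ≤ walk (ext N v) n)).card ≤
      2 * (univ.filter (fun v : Fin N → Bool => m ≤ walk (ext N v) N)).card := by
  classical
  set E := univ.filter (fun v : Fin N → Bool => m ≤ walk (ext N v) N) with hE
  set B := univ.filter (fun v : Fin N → Bool =>
    (∃ n, n ≤ N ∧ m ≤ walk (ext N v) n) ∧ walk (ext N v) N < m) with hB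
  have hsub : (univ.filter (fun v : Fin N → Bool => ∃ n, n ≤ N ∧ m ≤ walk (ext N v) n)) ⊆ E ∪ B := by
    intro v hvmem
    rw [mem_filter] at hvmem
    rcases lt_or_ge (walk (ext N v) N) m with h | h
    · exact mem_union_right _ (mem_filter.2 ⟨mem_univ _, hvmem.2, h⟩)
    · exact mem_union_left _ (mem_filter.2 ⟨mem_univ _, h⟩)
  have hBE : B.card ≤ E.card := by
    refine Finset.card_le_card_of_injOn (reflMap N m) ?_ ?_
    · intro v hvB
      rw [hB, mem_coe, mem_filter] at hvB
      obtain ⟨-, ⟨n, hn, hwn⟩, hend⟩ := hvB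
      have hne : (hitSet N m v).Nonempty := ⟨n, hn, hwn⟩
      have htau := Nat.sInf_mem hne
      have hτN : tau N m v ≤ N := htau.1
      have hwt := walk_tau hm hne
      have : walk (ext N (reflMap N m v)) N
          = 2 * walk (ext N v) (tau N m v) - walk (ext N v) N := by
        rw [walk_ext_reflMap N m v le_rfl, walk_flipAfter_of_ge _ hτN]
      rw [mem_coe, mem_filter]
      exact ⟨mem_univ _, by rw [this, hwt]; omega⟩
    · intro v1 h1 v2 h2 he
      simp only [coe_filter, Set.mem_setOf_eq, hB] at h1 h2
      have hne1 : (hitSet N m v1).Nonempty := by obtain ⟨-, ⟨n, hn, hwn⟩, -⟩ := h1; exact ⟨n, hn, hwn⟩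
      have hne2 : (hitSet N m v2).Nonempty := by obtain ⟨-, ⟨n, hn, hwn⟩, -⟩ := h2; exact ⟨n, hn, hwn⟩
      rw [← reflMap_involutive hm hne1, he, reflMap_involutive hm hne2]
  calc (univ.filter (fun v : Fin N → Bool => ∃ n, n ≤ N ∧ m ≤ walk (ext N v) n)).card
      ≤ (E ∪ B).card := Finset.card_le_card hsub
    _ ≤ E.card + B.card := Finset.card_union_le _ _
    _ ≤ 2 * E.card := by omega

lemma walk_ext_real (N : ℕ) (v : Fin N → Bool) :
    ((walk (ext N v) N : ℤ) : ℝ) = ∑ i : Fin N, (if v i then (1:ℝ) else -1) := by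
  rw [walk]
  push_cast
  rw [← Fin.sum_univ_eq_sum_range (fun i => if ext N v i then (1:ℝ) else -1) N]
  refine Finset.sum_congr rfl fun i _ => ?_
  simp [ext]

lemma card_end_le (N : ℕ) (hN : 0 < N) (m : ℤ) (hm : 0 ≤ m) :
    ((univ.filter (fun v : Fin N → Bool => m ≤ walk (ext N v) N)).card : ℝ)
      ≤ 2 ^ N * Real.exp (-(m : ℝ) ^ 2 / (2 * N)) := by
  classical
  set t : ℝ := (m : ℝ) / N with htdef
  have hNR : (0:ℝ) < N := by exact_mod_cast hN
  have ht : 0 ≤ t := div_nonneg (by exact_mod_cast hm) hNR.le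
  have step1 : ((univ.filter (fun v : Fin N → Bool => m ≤ walk (ext N v) N)).card : ℝ)
      ≤ ∑ v : Fin N → Bool, Real.exp (t * (((walk (ext N v) N : ℤ) : ℝ) - m)) := by
    rw [Finset.card_eq_sum_ones]
    push_cast
    refine le_trans (Finset.sum_le_sum fun v hv => ?_)
      (Finset.sum_le_sum_of_subset_of_nonneg (Finset.filter_subset _ _)
        (fun v _ _ => (Real.exp_pos _).le))
    rw [Finset.mem_filter] at hv
    have : (0:ℝ) ≤ t * (((walk (ext N v) N : ℤ) : ℝ) - m) := by
      have : (m:ℝ) ≤ ((walk (ext N v) N : ℤ) : ℝ) := by exact_mod_cast hv.2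
      nlinarith
    simpa using Real.one_le_exp this
  have step2 : ∑ v : Fin N → Bool, Real.exp (t * (((walk (ext N v) N : ℤ) : ℝ) - m))
      = Real.exp (-(t * m)) * (Real.exp t + Real.exp (-t)) ^ N := by
    have : ∀ v : Fin N → Bool, Real.exp (t * (((walk (ext N v) N : ℤ) : ℝ) - m))
        = Real.exp (-(t*m)) * ∏ i : Fin N, Real.exp (t * (if v i then (1:ℝ) else -1)) := by
      intro v
      rw [walk_ext_real, ← Real.exp_sum, ← Real.exp_add]
      congr 1
      rw [← Finset.mul_sum]
      ring
    rw [Finset.sum_congr rfl fun v _ => this v, ← Finset.mul_sum]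
    congr 1
    have := Finset.prod_univ_sum (fun _ : Fin N => (univ : Finset Bool))
      (fun _ b => Real.exp (t * (if b then (1:ℝ) else -1)))
    rw [Fintype.piFinset_univ] at this
    rw [← this]
    have hb : ∀ _i : Fin N, (∑ b : Bool, Real.exp (t * (if b then (1:ℝ) else -1)))
        = Real.exp t + Real.exp (-t) := by
      intro i
      rw [Fintype.sum_bool]
      simp [mul_neg_one]
    rw [Finset.prod_congr rfl fun i _ => hb i, Finset.prod_const, Finset.card_univ,
      Fintype.card_fin]
  have step3 : Real.exp t + Real.exp (-t) = 2 * Real.cosh t := by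
    rw [Real.cosh_eq]; ring
  have step4 : Real.cosh t ≤ Real.exp (t ^ 2 / 2) := Real.cosh_le_exp_half_sq t
  calc ((univ.filter (fun v : Fin N → Bool => m ≤ walk (ext N v) N)).card : ℝ)
      ≤ Real.exp (-(t * m)) * (Real.exp t + Real.exp (-t)) ^ N := by rw [← step2]; exact step1
    _ ≤ Real.exp (-(t * m)) * (2 * Real.exp (t ^ 2 / 2)) ^ N := by
        refine mul_le_mul_of_nonneg_left (pow_le_pow_left₀ ?_ ?_ N) (Real.exp_pos _).le
        · positivity
        · rw [step3]; nlinarith [Real.cosh_pos t]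
    _ = 2 ^ N * Real.exp (N * (t ^ 2 / 2) - t * m) := by
        rw [mul_pow, ← Real.exp_nat_mul, mul_left_comm, ← Real.exp_add]
        congr 1
        ring
    _ = 2 ^ N * Real.exp (-(m : ℝ) ^ 2 / (2 * N)) := by
        congr 1
        rw [htdef]
        field_simp
        ring
lemma walk_cast (v : ℕ → Bool) (n : ℕ) : ((walk v n : ℤ) : ℝ) = 2 * coinSum v n - n := by
  induction n with
  | zero => simp [walk, coinSum]
  | succ n ih =>
    have h1 : coinSum v (n + 1) = coinSum v n + ((v n).toNat : ℝ) := Finset.sum_range_succ _ n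
    rw [walk_succ, h1]
    push_cast
    rw [ih]
    cases h : v n <;> simp [h] <;> push_cast <;> ring

lemma nearestNat_abs {γ : ℝ} {r : ℕ} (h : 1 ≤ γ ^ r) :
    |(nearestNat γ r : ℝ) - γ ^ r| ≤ 1 / 2 := by
  have h1 := abs_sub_round (γ ^ r)
  have h2 := abs_le.1 h1
  have h3 : (0:ℤ) ≤ round (γ ^ r) := by
    have : (0:ℝ) ≤ (round (γ ^ r) : ℝ) := by linarith [h2.2]
    exact_mod_cast this
  have h4 : ((nearestNat γ r : ℕ) : ℝ) = ((round (γ ^ r) : ℤ) : ℝ) := by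
    rw [nearestNat]
    exact_mod_cast congrArg (Int.cast : ℤ → ℝ) (Int.toNat_of_nonneg h3)
  rw [h4, abs_sub_comm]
  exact h1

lemma card_half_pow (k N : ℕ) : (k : ENNReal) * (1/2 : ENNReal) ^ N
    = ENNReal.ofReal ((k : ℝ) * (1/2 : ℝ) ^ N) := by
  rw [ENNReal.ofReal_mul (by positivity), ENNReal.ofReal_pow (by norm_num),
    ENNReal.ofReal_natCast]
  congr 2
  rw [ENNReal.ofReal_div_of_pos (by norm_num)]
  norm_num

end LILAux


open MeasureTheory Filter in
set_option maxHeartbeats 2000000 in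
open ENNReal in
/-- Eventual polynomial-logarithmic bound on the upper-LIL events: for `1 < γ < λ`,
there are a constant `C > 0` and `R` such that `μ(B_r) ≤ C / (log n_r)^λ` for all
`r ≥ R`. -/
theorem upperLILEvent_measure_le (μ : Measure (ℕ → Bool)) (hμ : IsFairCoin μ)
    (lam γ : ℝ) (hγ : 1 < γ) (hγlam : γ < lam) :
    ∃ C : ℝ, 0 < C ∧ ∃ R : ℕ, ∀ r : ℕ, R ≤ r →
      μ (upperLILEvent lam γ r)
        ≤ ENNReal.ofReal (C / Real.log (nearestNat γ r) ^ lam) := by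
  obtain ⟨hprob, hcyl⟩ := hμ
  have hlam1 : 1 < lam := lt_trans hγ hγlam
  set γ' : ℝ := (γ + lam) / 2 with hγ'def
  clear_value γ'
  have hγγ' : γ < γ' := by rw [hγ'def]; linarith
  have hγ'lam : γ' < lam := by rw [hγ'def]; linarith
  have hγ'pos : 0 < γ' := by linarith
  have hγ'ne : γ' ≠ 0 := ne_of_gt hγ'pos
  set c : ℝ := lam ^ 2 / γ' with hcdef
  clear_value c
  have hclam : lam ≤ c := by
    rw [hcdef, le_div_iff₀ hγ'pos]; nlinarith
  obtain ⟨R, hR⟩ := Filter.eventually_atTop.1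
    ((tendsto_pow_atTop_atTop_of_one_lt hγ).eventually_ge_atTop
      (max ((γ' + 1) / (2 * (γ' - γ))) 4))
  refine ⟨2, by norm_num, R, fun r hr => ?_⟩
  have hx := hR r hr
  have hx4 : (4:ℝ) ≤ γ ^ r := le_trans (le_max_right _ _) hx
  have hxK : (γ' + 1) / (2 * (γ' - γ)) ≤ γ ^ r := le_trans (le_max_left _ _) hx
  have hx1 : (1:ℝ) ≤ γ ^ r := by linarith
  have hxsucc : γ ^ r ≤ γ ^ (r + 1) := by rw [pow_succ]; nlinarith
  have hx1' : (1:ℝ) ≤ γ ^ (r + 1) := le_trans hx1 hxsucc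
  have habs1 := LILAux.nearestNat_abs (γ := γ) (r := r) hx1
  have habs2 := LILAux.nearestNat_abs (γ := γ) (r := r + 1) hx1'
  set nr := nearestNat γ r with hnrdef
  set N := nearestNat γ (r + 1) with hNdef
  clear_value nr N
  have h1 := abs_le.1 habs1
  have h2 := abs_le.1 habs2
  have hnr_lb : γ ^ r - 1/2 ≤ (nr:ℝ) := by linarith [h1.1]
  have hnr_ub : (nr:ℝ) ≤ γ ^ r + 1/2 := by linarith [h1.2]
  have hN_lb : γ ^ (r+1) - 1/2 ≤ (N:ℝ) := by linarith [h2.1]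
  have hN_ub : (N:ℝ) ≤ γ ^ (r+1) + 1/2 := by linarith [h2.2]
  have hnr3 : (3:ℝ) ≤ (nr:ℝ) := by linarith
  have hN3 : (3:ℝ) ≤ (N:ℝ) := by linarith
  have hNpos : 0 < N := by exact_mod_cast lt_of_lt_of_le (by norm_num : (0:ℝ) < 3) hN3
  have hNR0 : (0:ℝ) < (N:ℝ) := by exact_mod_cast hNpos
  have hNγ' : (N:ℝ) ≤ γ' * nr := by
    rw [div_le_iff₀ (by linarith : (0:ℝ) < 2 * (γ' - γ))] at hxK
    have hpow : γ ^ (r+1) = γ * γ ^ r := by ring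
    nlinarith
  set l : ℝ := Real.log nr with hldef
  clear_value l
  have h3log : (1:ℝ) < Real.log 3 := by
    rw [show (1:ℝ) = Real.log (Real.exp 1) from (Real.log_exp 1).symm]
    exact Real.log_lt_log (Real.exp_pos 1) (by linarith [Real.exp_one_lt_d9])
  have hl : 1 < l := by
    refine lt_of_lt_of_le h3log ?_
    rw [hldef]
    exact (Real.log_le_log_iff (by norm_num) (by linarith)).2 hnr3
  have hl0 : 0 < l := by linarith
  set L : ℝ := Real.log l with hLdef
  clear_value L
  have hL : 0 < L := by rw [hLdef]; exact Real.log_pos hl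
  have hprod0 : 0 ≤ ((nr:ℝ)/2) * L := mul_nonneg (by positivity) hL.le
  set a : ℝ := lam * Real.sqrt (((nr:ℝ) / 2) * L) with hadef
  have ha0 : 0 ≤ a := by
    rw [hadef]; exact mul_nonneg (by linarith) (Real.sqrt_nonneg _)
  have ha2 : a ^ 2 = lam ^ 2 * (((nr:ℝ)/2) * L) := by
    rw [hadef, mul_pow, Real.sq_sqrt hprod0]
  clear_value a
  set m : ℤ := ⌊2 * a⌋ + 1 with hmdef
  have hm1 : (1:ℤ) ≤ m := by
    have h := Int.floor_nonneg.2 (by linarith : (0:ℝ) ≤ 2 * a)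
    rw [hmdef]; omega
  have hm2a : 2 * a < (m:ℝ) := by
    rw [hmdef]; push_cast; linarith [Int.lt_floor_add_one (2*a)]
  clear_value m
  have hm0 : (0:ℝ) ≤ (m:ℝ) := by exact_mod_cast (by omega : (0:ℤ) ≤ m)
  have hkey : c * L ≤ (m:ℝ)^2 / (2*(N:ℝ)) := by
    clear! μ
    rw [le_div_iff₀ (by linarith : (0:ℝ) < 2*(N:ℝ))]
    have hm2 : 2 * lam^2 * (nr:ℝ) * L ≤ (m:ℝ)^2 := by
      clear * - ha2 ha0 hm2a hm0
      nlinarith [sq_nonneg ((m:ℝ) - 2*a), ha2, ha0, hm2a, hm0]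
    have h5 : 2*lam^2*L*(N:ℝ) ≤ 2*lam^2*L*(γ'*(nr:ℝ)) :=
      mul_le_mul_of_nonneg_left hNγ'
        (mul_nonneg (mul_nonneg (by norm_num) (sq_nonneg lam)) hL.le)
    have h6 : c * L * (2*(N:ℝ)) * γ' = 2*lam^2*L*(N:ℝ) := by
      rw [hcdef]; field_simp
    have hmul := mul_le_mul_of_nonneg_right hm2 hγ'pos.le
    have h7 : c * L * (2*(N:ℝ)) * γ' ≤ (m:ℝ)^2 * γ' := by
      clear * - h5 h6 hmul
      linarith
    exact (mul_le_mul_iff_of_pos_right hγ'pos).mp h7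
  set H := Finset.univ.filter (fun v : Fin N → Bool =>
      ∃ n, n ≤ N ∧ m ≤ LILAux.walk (LILAux.ext N v) n) with hHdef
  set E := Finset.univ.filter
      (fun v : Fin N → Bool => m ≤ LILAux.walk (LILAux.ext N v) N) with hEdef
  clear_value H E
  have hsub : upperLILEvent lam γ r ⊆
      ⋃ v ∈ H, {X : ℕ → Bool | ∀ i ∈ Finset.range N, X i = LILAux.ext N v i} := by
    intro X hX
    obtain ⟨n, hn1, hn2, hn3⟩ := hX
    rw [← hnrdef, ← hldef, ← hLdef, ← hadef] at hn3
    rw [← hNdef] at hn2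
    set v : Fin N → Bool := fun i => X i with hvdef
    have hext : ∀ i, i < N → LILAux.ext N v i = X i := fun i hi => LILAux.ext_lt v hi
    refine Set.mem_iUnion₂.2 ⟨v, ?_, ?_⟩
    · rw [hHdef, Finset.mem_filter]
      refine ⟨Finset.mem_univ _, n, hn2, ?_⟩
      have hwalkeq : LILAux.walk (LILAux.ext N v) n = LILAux.walk X n :=
        LILAux.walk_congr fun i hi => hext i (lt_of_lt_of_le hi hn2)
      rw [hwalkeq, hmdef, Int.add_one_le_iff, Int.floor_lt, LILAux.walk_cast X n]
      linarith
    · intro i hi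
      exact (hext i (Finset.mem_range.1 hi)).symm
  have hcount1 : H.card ≤ 2 * E.card := by
    rw [hHdef, hEdef]; exact LILAux.reflection_count N m hm1
  have hcount2 : ((E.card : ℕ) : ℝ) ≤ 2 ^ N * Real.exp (-(m:ℝ)^2 / (2*(N:ℝ))) := by
    rw [hEdef]; exact LILAux.card_end_le N hNpos m (by omega)
  have hmeas : ∀ v : Fin N → Bool,
      μ {X : ℕ → Bool | ∀ i ∈ Finset.range N, X i = LILAux.ext N v i}
        = (1/2 : ℝ≥0∞) ^ N := by
    intro v
    rw [hcyl (Finset.range N) (LILAux.ext N v), Finset.card_range]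
  have hstep : μ (upperLILEvent lam γ r) ≤ (H.card : ℝ≥0∞) * (1/2 : ℝ≥0∞) ^ N := by
    refine le_trans (measure_mono hsub) ?_
    refine le_trans (measure_biUnion_finset_le H _) ?_
    rw [Finset.sum_congr rfl fun v _ => hmeas v, Finset.sum_const, nsmul_eq_mul]
  have hofreal := LILAux.card_half_pow H.card N
  have hreal : (H.card : ℝ) * (1/2:ℝ)^N ≤ 2 / l ^ lam := by
    have e1 : (H.card : ℝ) ≤ 2 * (E.card : ℝ) := by exact_mod_cast hcount1
    have e2 : (H.card : ℝ) ≤ 2 * (2^N * Real.exp (-(m:ℝ)^2/(2*(N:ℝ)))) := by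
      clear * - hcount2 e1
      linarith [hcount2]
    calc (H.card : ℝ) * (1/2:ℝ)^N
        ≤ (2 * (2^N * Real.exp (-(m:ℝ)^2/(2*(N:ℝ))))) * (1/2:ℝ)^N :=
          mul_le_mul_of_nonneg_right e2 (by positivity)
      _ = 2 * Real.exp (-(m:ℝ)^2/(2*(N:ℝ))) := by
          have h2N : ((2:ℝ)^N) * ((1/2:ℝ)^N) = 1 := by
            rw [← mul_pow]; norm_num
          calc (2 * (2^N * Real.exp (-(m:ℝ)^2/(2*(N:ℝ))))) * (1/2:ℝ)^N
              = 2 * Real.exp (-(m:ℝ)^2/(2*(N:ℝ))) * (((2:ℝ)^N) * ((1/2:ℝ)^N)) := by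
                ring
            _ = 2 * Real.exp (-(m:ℝ)^2/(2*(N:ℝ))) := by rw [h2N, mul_one]
      _ ≤ 2 * Real.exp (-(c*L)) := by
          have hle : -(m:ℝ)^2/(2*(N:ℝ)) ≤ -(c*L) := by
            rw [neg_div]; exact neg_le_neg hkey
          have he1 := Real.exp_le_exp.2 hle
          clear * - he1
          linarith [he1]
      _ = 2 * l ^ (-c) := by
          rw [Real.rpow_def_of_pos hl0, ← hLdef]
          congr 2
          ring
      _ ≤ 2 * l ^ (-lam) := by
          have hrr := Real.rpow_le_rpow_of_exponent_le hl.le (by linarith : -c ≤ -lam)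
          clear * - hrr
          linarith
      _ = 2 / l ^ lam := by
          rw [Real.rpow_neg hl0.le, div_eq_mul_inv]
  calc μ (upperLILEvent lam γ r) ≤ (H.card : ℝ≥0∞) * (1/2 : ℝ≥0∞) ^ N := hstep
    _ = ENNReal.ofReal ((H.card : ℝ) * (1/2 : ℝ) ^ N) := hofreal
    _ ≤ ENNReal.ofReal (2 / l ^ lam) := ENNReal.ofReal_le_ofReal hreal
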